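/- arXiv:2411.18584 — 2 statements merged into one kernel-verified Lean document; each statement's English description precedes it below -/
import Mathlib

section
/- Let 1 ≤ i < j ≤ n, and let L and L′ be ordered lists such that the concatenation [L, j, −j, L′] consists of distinct elements of ±[n]. Then the hopping operators h_{i, [L, j, −j, L′]} and h_{i, [L, −j, j, L′]} coincide: for every signed permutation u, h_{i, [L, j, −j, L′]}(u) = h_{i, [L, −j, j, L′]}(u). -/
open Equiv

/-- The key of `a : ℤ` in the total order `1 < 2 < ⋯ < n < -n < ⋯ < -2 < -1` on `±[n]`:
elements of `±[n]` get the keys `1, …, 2n` (in order); anything else gets key `2n+1`. -/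
def dkey (n : ℕ) (a : ℤ) : ℤ :=
  if 1 ≤ a ∧ a ≤ (n : ℤ) then a
  else if -(n : ℤ) ≤ a ∧ a ≤ -1 then 2 * n + 1 + a
  else 2 * n + 1

/-- `a < b` in the total order `1 < 2 < ⋯ < n < -n < ⋯ < -2 < -1` on `±[n]`. -/
def dlt (n : ℕ) (a b : ℤ) : Prop := dkey n a < dkey n b

instance (n : ℕ) (a b : ℤ) : Decidable (dlt n a b) :=
  inferInstanceAs (Decidable (dkey n a < dkey n b))

/-- `a` is an element of `±[n] = {1,…,n} ∪ {-1,…,-n}`. -/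
def inPM (n : ℕ) (a : ℤ) : Prop := a ≠ 0 ∧ |a| ≤ (n : ℤ)

instance (n : ℕ) (a : ℤ) : Decidable (inPM n a) :=
  inferInstanceAs (Decidable (a ≠ 0 ∧ |a| ≤ (n : ℤ)))

/-- The element of `±[n]` whose key is `k` (for `1 ≤ k ≤ 2n`). -/
def ofKey (n : ℕ) (k : ℤ) : ℤ := if k ≤ (n : ℤ) then k else k - (2 * n + 1)

/-- A signed permutation of `±[n]`, viewed as a permutation of `ℤ`:
it commutes with negation and fixes everything outside `±[n]`. -/
def IsSignedPerm (n : ℕ) (w : Perm ℤ) : Prop :=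
  (∀ a : ℤ, w (-a) = -(w a)) ∧ ∀ a : ℤ, (n : ℤ) < |a| → w a = a

/-- An even signed permutation of `±[n]`, i.e. an element of the group `D_n`. -/
def IsEvenSignedPerm (n : ℕ) (w : Perm ℤ) : Prop :=
  IsSignedPerm n w ∧ Even ((Finset.Icc (1 : ℤ) (n : ℤ)).filter fun i => w i < 0).card

/-- The simple generators `s_1, …, s_n` of `D_n`:  for `1 ≤ i ≤ n-1`, `s_i` exchanges the
values `i ↔ i+1` and `-i ↔ -(i+1)`;  `s_n` exchanges the values `n-1 ↔ -n` and `n ↔ -(n-1)`. -/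
def sgen (n i : ℕ) : Perm ℤ :=
  if i = n then Equiv.swap ((n : ℤ) - 1) (-(n : ℤ)) * Equiv.swap (n : ℤ) (-((n : ℤ) - 1))
  else Equiv.swap (i : ℤ) ((i : ℤ) + 1) * Equiv.swap (-(i : ℤ)) (-((i : ℤ) + 1))

/-- The product `s_{l₁} s_{l₂} ⋯ s_{l_k}` of the word `l = [l₁, …, l_k]`. -/
def wordProd (n : ℕ) (l : List ℕ) : Perm ℤ := (l.map (sgen n)).prod

/-- The Coxeter length of `w ∈ D_n`: the least length of a word in `s_1, …, s_n` whose
product is `w`. -/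
noncomputable def DLength (n : ℕ) (w : Perm ℤ) : ℕ :=
  sInf {k | ∃ l : List ℕ, (∀ i ∈ l, 1 ≤ i ∧ i ≤ n) ∧ l.length = k ∧ wordProd n l = w}

/-- `dem` is the Demazure product of the Coxeter group `D_n`: the (unique) associative
product on `D_n`, with identity `id`, such that for each simple generator `s` and `u ∈ D_n`,
`s ⋆ u = s·u` if `ℓ(s·u) > ℓ(u)`, and `s ⋆ u = u` if `ℓ(s·u) < ℓ(u)`. -/
def IsDemazure (n : ℕ) (dem : Perm ℤ → Perm ℤ → Perm ℤ) : Prop :=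
  (∀ u v, IsEvenSignedPerm n u → IsEvenSignedPerm n v → IsEvenSignedPerm n (dem u v)) ∧
  (∀ u v w, IsEvenSignedPerm n u → IsEvenSignedPerm n v → IsEvenSignedPerm n w →
      dem (dem u v) w = dem u (dem v w)) ∧
  (∀ u, IsEvenSignedPerm n u → dem 1 u = u ∧ dem u 1 = u) ∧
  (∀ i, 1 ≤ i → i ≤ n → ∀ u, IsEvenSignedPerm n u →
      (DLength n u < DLength n (sgen n i * u) → dem (sgen n i) u = sgen n i * u) ∧
      (DLength n (sgen n i * u) < DLength n u → dem (sgen n i) u = u))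

/-- The swap performed in one step of the hopping procedure: exchange the values `t ↔ q`
and simultaneously `-t ↔ -q` (unless `t = -q`). -/
def hswap (t q : ℤ) : Perm ℤ :=
  if t = -q then Equiv.swap t q else Equiv.swap t q * Equiv.swap (-t) (-q)

/-- `q` is eligible for hopping `t` in `w`: `q ∈ ±[n]`, `q > t` in the order on `±[n]`,
and `q` occurs strictly to the right of `t` in the unfolding of `w`. -/
def HopStep (n : ℕ) (w : Perm ℤ) (t q : ℤ) : Prop :=
  inPM n q ∧ dlt n t q ∧ dkey n (w⁻¹ t) < dkey n (w⁻¹ q) ∧ dkey n (w⁻¹ q) ≤ 2 * n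

instance (n : ℕ) (w : Perm ℤ) (t q : ℤ) : Decidable (HopStep n w t q) :=
  inferInstanceAs (Decidable
    (inPM n q ∧ dlt n t q ∧ dkey n (w⁻¹ t) < dkey n (w⁻¹ q) ∧ dkey n (w⁻¹ q) ≤ 2 * n))

theorem hop_measure (n : ℕ) (w : Perm ℤ) (t q : ℤ) (h : HopStep n w t q) :
    (2 * (n : ℤ) + 1 - dkey n ((hswap t q * w)⁻¹ t)).toNat
      < (2 * (n : ℤ) + 1 - dkey n (w⁻¹ t)).toNat := by
  obtain ⟨⟨hq0, _⟩, _, hlt, hle⟩ := h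
  have key : (hswap t q * w)⁻¹ t = w⁻¹ q := by
    have hs : (hswap t q)⁻¹ t = q := by
      unfold hswap
      split_ifs with he
      · subst he
        simp [Equiv.swap_inv, Equiv.swap_apply_left]
      · have h1 : q ≠ -t := fun hc => he (by omega)
        have h2 : q ≠ -q := fun hc => hq0 (by omega)
        simp [mul_inv_rev, Equiv.swap_inv, Equiv.Perm.mul_apply, Equiv.swap_apply_left,
          Equiv.swap_apply_of_ne_of_ne h1 h2]
    rw [mul_inv_rev, Equiv.Perm.mul_apply, hs]
  rw [key]
  omega

/-- The hopping operator `h_{t,L}`: repeatedly pick the element `q` of `L`, occurring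
latest in `L`, among those greater than `t` occurring strictly to the right of `t` in
the unfolding of `w`; swap the values `t ↔ q` (and `-t ↔ -q`, unless `t = -q`); stop
when no such `q` exists. -/
def hop (n : ℕ) (t : ℤ) (L : List ℤ) (w : Perm ℤ) : Perm ℤ :=
  match h : L.reverse.find? (fun q => decide (HopStep n w t q)) with
  | none => w
  | some q => hop n t L (hswap t q * w)
termination_by (2 * (n : ℤ) + 1 - dkey n (w⁻¹ t)).toNat
decreasing_by
  have hq := List.find?_some h
  simp only [decide_eq_true_eq] at hq
  exact hop_measure n w t q hq

/-- The unfolding `[w(1), …, w(n), -w(n), …, -w(1)]` of a signed permutation `w`. -/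
def unfoldList (n : ℕ) (w : Perm ℤ) : List ℤ :=
  (List.range (2 * n)).map fun p => w (ofKey n ((p : ℤ) + 1))

/-- `w ↖ t`: the ordered list of entries of the unfolding of `w` occurring strictly to the
left of the value `t` and lying strictly between `t` and `-t` in the order on `±[n]`. -/
def liftD (n : ℕ) (w : Perm ℤ) (t : ℤ) : List ℤ :=
  ((unfoldList n w).take (dkey n (w⁻¹ t) - 1).toNat).filter
    fun a => decide (dlt n t a ∧ dlt n a (-t))

/-- `L ∼ₜ L'` : the hopping operators `h_{t,L}` and `h_{t,L'}` agree on all of `D_n`. -/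
def HopEquiv (n : ℕ) (t : ℤ) (L L' : List ℤ) : Prop :=
  ∀ u : Perm ℤ, IsEvenSignedPerm n u → hop n t L u = hop n t L' u

/-- The list `[a, a+1, …, b]` (as integers). -/
def listUp (a b : ℕ) : List ℤ := (List.range (b + 1 - a)).map fun k => (a : ℤ) + k

/-- The list `[-b, -(b-1), …, -a]` (as integers). -/
def listNegUp (a b : ℕ) : List ℤ := (List.range (b + 1 - a)).map fun k => -(b : ℤ) + k

/-- For `1 ≤ i ≤ n-2` : `Q` is one of the minimal coset representatives
(form 0: `id`; form 1: `s_i ⋯ s_j`; form 2: `s_i ⋯ s_{n-2} s_n s_{n-1} ⋯ s_j`;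
form 3: `s_i ⋯ s_{n-2} s_n`). -/
def QForm (n i : ℕ) (Q : Perm ℤ) : Prop :=
  Q = 1 ∨
  (∃ j, i ≤ j ∧ j ≤ n - 1 ∧ Q = wordProd n (List.range' i (j + 1 - i))) ∨
  (∃ j, i ≤ j ∧ j ≤ n - 1 ∧
    Q = wordProd n (List.range' i (n - 1 - i) ++ [n] ++ (List.range' j (n - j)).reverse)) ∨
  Q = wordProd n (List.range' i (n - 1 - i) ++ [n])

/-- `Q` is one of the four elements `id`, `s_{n-1}`, `s_n s_{n-1}`, `s_n` of
`W_{{s_{n-1}, s_n}}`. -/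
def QFormTop (n : ℕ) (Q : Perm ℤ) : Prop :=
  Q = 1 ∨ Q = sgen n (n - 1) ∨ Q = sgen n n * sgen n (n - 1) ∨ Q = sgen n n

/-- For `1 ≤ i ≤ n-2`: `(Q, L)` is a factor of a parabolic factorization together with
its associated list `L_i`. -/
def QList (n i : ℕ) (Q : Perm ℤ) (L : List ℤ) : Prop :=
  (Q = 1 ∧ L = []) ∨
  (∃ j, i ≤ j ∧ j ≤ n - 1 ∧ Q = wordProd n (List.range' i (j + 1 - i)) ∧
    L = listUp (i + 1) (j + 1)) ∨
  (∃ j, i ≤ j ∧ j ≤ n - 1 ∧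
    Q = wordProd n (List.range' i (n - 1 - i) ++ [n] ++ (List.range' j (n - j)).reverse) ∧
    L = listUp (i + 1) n ++ listNegUp (j + 1) n) ∨
  (Q = wordProd n (List.range' i (n - 1 - i) ++ [n]) ∧
    L = listUp (i + 1) (n - 1) ++ [-(n : ℤ)])

/-- `(Q, L)` is the top factor `Q_{n-1}` of a parabolic factorization together with its
associated list `L_{n-1}`. -/
def QListTop (n : ℕ) (Q : Perm ℤ) (L : List ℤ) : Prop :=
  (Q = 1 ∧ L = []) ∨ (Q = sgen n (n - 1) ∧ L = [(n : ℤ)]) ∨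
  (Q = sgen n n * sgen n (n - 1) ∧ L = [(n : ℤ), -(n : ℤ)]) ∨
  (Q = sgen n n ∧ L = [-(n : ℤ)])

/-- The partial product `Q_{n-1} Q_{n-2} ⋯ Q_k` of a parabolic factorization. -/
def prodQ (n : ℕ) (Q : ℕ → Perm ℤ) (k : ℕ) : Perm ℤ :=
  (((List.range' k (n - k)).reverse).map Q).prod

/-- The letterwise extended Demazure action of the generator `s_i` (for `1 ≤ i ≤ n-1`) on an
arbitrary signed permutation: `s_i ⋆ u = s_i·u` if the value `i` occurs strictly to the left
of the value `i+1` in the unfolding of `u`, and `u` otherwise. -/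
def demStep (n i : ℕ) (u : Perm ℤ) : Perm ℤ :=
  if dkey n (u⁻¹ (i : ℤ)) < dkey n (u⁻¹ ((i : ℤ) + 1)) then sgen n i * u else u

/-- The letterwise extended Demazure action of a word:
`(s_{a₁} ⋯ s_{a_k}) ⋆ u = s_{a₁} ⋆ (s_{a₂} ⋆ (⋯ (s_{a_k} ⋆ u)))`. -/
def demWord (n : ℕ) (l : List ℕ) (u : Perm ℤ) : Perm ℤ := l.foldr (demStep n) u

/-- A member of the symmetric group on `±[n]`, viewed as a permutation of `ℤ`:
it fixes `0` and everything of absolute value `> n`. -/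
def IsPermPM (n : ℕ) (w : Perm ℤ) : Prop := ∀ a : ℤ, a = 0 ∨ (n : ℤ) < |a| → w a = a

/-- The simple generators of the symmetric group on `±[n]` (type `A_{2n-1}`):
`agen n k` (for `1 ≤ k ≤ 2n-1`) transposes the order-adjacent elements of `±[n]`
with keys `k` and `k+1`. -/
def agen (n k : ℕ) : Perm ℤ := Equiv.swap (ofKey n (k : ℤ)) (ofKey n ((k : ℤ) + 1))

/-- The Coxeter length of an element of the symmetric group on `±[n]`. -/
noncomputable def ALength (n : ℕ) (w : Perm ℤ) : ℕ :=
  sInf {k | ∃ l : List ℕ, (∀ i ∈ l, 1 ≤ i ∧ i ≤ 2 * n - 1) ∧ l.length = k ∧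
    (l.map (agen n)).prod = w}

/-- `dem` is the Demazure product of the symmetric group on `±[n]`, viewed as a Coxeter
group of type `A_{2n-1}` with simple generators the transpositions of order-adjacent
elements of `±[n]`. -/
def IsDemazureA (n : ℕ) (dem : Perm ℤ → Perm ℤ → Perm ℤ) : Prop :=
  (∀ u v, IsPermPM n u → IsPermPM n v → IsPermPM n (dem u v)) ∧
  (∀ u v w, IsPermPM n u → IsPermPM n v → IsPermPM n w →
      dem (dem u v) w = dem u (dem v w)) ∧
  (∀ u, IsPermPM n u → dem 1 u = u ∧ dem u 1 = u) ∧
  (∀ k, 1 ≤ k → k ≤ 2 * n - 1 → ∀ u, IsPermPM n u →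
      (ALength n u < ALength n (agen n k * u) → dem (agen n k) u = agen n k * u) ∧
      (ALength n (agen n k * u) < ALength n u → dem (agen n k) u = u))

open Equiv
lemma hop_none {n : ℕ} {t : ℤ} {L : List ℤ} {w : Perm ℤ}
    (h : L.reverse.find? (fun q => decide (HopStep n w t q)) = none) :
    hop n t L w = w := by
  rw [hop]
  split
  · rfl
  · rename_i q hq; rw [h] at hq; cases hq

lemma hop_some {n : ℕ} {t : ℤ} {L : List ℤ} {w : Perm ℤ} {q : ℤ}
    (h : L.reverse.find? (fun q => decide (HopStep n w t q)) = some q) :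
    hop n t L w = hop n t L (hswap t q * w) := by
  rw [hop]
  split
  · rename_i hq; rw [h] at hq; cases hq
  · rename_i q' hq; rw [h] at hq; cases hq; rfl
open Equiv

lemma dkey_bounds {n : ℕ} {a : ℤ} (h : inPM n a) : 1 ≤ dkey n a ∧ dkey n a ≤ 2 * n := by
  obtain ⟨h0, h1⟩ := h
  rw [abs_le] at h1
  unfold dkey; split_ifs <;> omega

lemma dkey_neg {n : ℕ} {a : ℤ} (h : inPM n a) : dkey n (-a) = 2 * n + 1 - dkey n a := by
  obtain ⟨h0, h1⟩ := h
  rw [abs_le] at h1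
  unfold dkey; split_ifs <;> omega

lemma sp_inv_neg {n : ℕ} {u : Perm ℤ} (hu : IsSignedPerm n u) (a : ℤ) :
    u⁻¹ (-a) = -(u⁻¹ a) := by
  have h := hu.1 (u⁻¹ a)
  rw [show u (u⁻¹ a) = a from u.apply_symm_apply a] at h
  calc u⁻¹ (-a) = u⁻¹ (u (-(u⁻¹ a))) := by rw [h]
  _ = -(u⁻¹ a) := u.symm_apply_apply _

lemma sp_inv_mem {n : ℕ} {u : Perm ℤ} (hu : IsSignedPerm n u) {a : ℤ} (h : inPM n a) :
    inPM n (u⁻¹ a) := by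
  by_contra hc
  unfold inPM at hc h
  push_neg at hc
  have h0 : u (u⁻¹ a) = a := u.apply_symm_apply a
  rcases eq_or_ne (u⁻¹ a) 0 with h1 | h1
  · have h3 := hu.1 0
    simp only [neg_zero] at h3
    have h4 : u 0 = 0 := by omega
    rw [h1, h4] at h0; exact h.1 h0.symm
  · have h2 : (n:ℤ) < |u⁻¹ a| := hc h1
    have h5 := hu.2 _ h2
    rw [h5] at h0
    rw [h0] at h2
    exact absurd h.2 (not_le.mpr h2)

lemma hswap_apply (t q : ℤ) (ht : t ≠ 0) (hq : q ≠ 0) (a : ℤ) :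
    hswap t q a = if a = t then q else if a = q then t
      else if a = -t then -q else if a = -q then -t else a := by
  rcases eq_or_ne t (-q) with h | h
  · rw [hswap, if_pos h]
    simp only [Equiv.swap_apply_def]
    split_ifs <;> omega
  · rw [hswap, if_neg h]
    simp only [Equiv.Perm.mul_apply, Equiv.swap_apply_def]
    split_ifs <;> omega

lemma hswap_inv (t q : ℤ) (ht : t ≠ 0) (hq : q ≠ 0) : (hswap t q)⁻¹ = hswap t q := by
  rcases eq_or_ne t (-q) with h | h
  · rw [hswap, if_pos h, Equiv.swap_inv]
  · rw [hswap, if_neg h, mul_inv_rev, Equiv.swap_inv, Equiv.swap_inv]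
    ext a
    simp only [Equiv.Perm.mul_apply, Equiv.swap_apply_def]
    split_ifs <;> omega

lemma hswap_signed {n : ℕ} {t q : ℤ} (ht : inPM n t) (hq : inPM n q) :
    IsSignedPerm n (hswap t q) := by
  obtain ⟨ht0, ht1⟩ := ht; obtain ⟨hq0, hq1⟩ := hq
  rw [abs_le] at ht1 hq1
  constructor
  · intro a
    rw [hswap_apply t q ht0 hq0 (-a), hswap_apply t q ht0 hq0 a]
    split_ifs <;> omega
  · intro a ha
    rw [hswap_apply t q ht0 hq0 a]
    have h2 := lt_abs.mp ha
    split_ifs <;> omega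

lemma signed_mul {n : ℕ} {v u : Perm ℤ} (hv : IsSignedPerm n v) (hu : IsSignedPerm n u) :
    IsSignedPerm n (v * u) := by
  constructor
  · intro a; simp only [Equiv.Perm.mul_apply, hu.1, hv.1]
  · intro a ha; simp only [Equiv.Perm.mul_apply, hu.2 a ha, hv.2 a ha]

lemma hswap_mul_inv_apply {t q : ℤ} (ht : t ≠ 0) (hq : q ≠ 0) (u : Perm ℤ) (x : ℤ) :
    (hswap t q * u)⁻¹ x = u⁻¹ (hswap t q x) := by
  rw [mul_inv_rev, Equiv.Perm.mul_apply, hswap_inv t q ht hq]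


/-- if `1 ≤ i < j ≤ n` then `h_{i,[L,j,-j,L']} = h_{i,[L,-j,j,L']}`
on every signed permutation. -/
theorem hop_swap_adjacent_negpair (n : ℕ) (hn : 2 ≤ n) (i j : ℕ)
    (hi : 1 ≤ i) (hij : i < j) (hj : j ≤ n) (L L' : List ℤ)
    (hnd : (L ++ [(j : ℤ), -(j : ℤ)] ++ L').Nodup)
    (hmem : ∀ a ∈ L ++ [(j : ℤ), -(j : ℤ)] ++ L', inPM n a)
    (u : Perm ℤ) (hu : IsSignedPerm n u) :
    hop n (i : ℤ) (L ++ [(j : ℤ), -(j : ℤ)] ++ L') u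
      = hop n (i : ℤ) (L ++ [-(j : ℤ), (j : ℤ)] ++ L') u := by
  have hine0 : (i:ℤ) ≠ 0 := by omega
  have hjne0 : (j:ℤ) ≠ 0 := by omega
  have hnjne0 : -(j:ℤ) ≠ 0 := by omega
  have hiM : inPM n (i:ℤ) := ⟨hine0, by rw [abs_le]; omega⟩
  have hjM : inPM n (j:ℤ) := ⟨hjne0, by rw [abs_le]; omega⟩
  have hnjM : inPM n (-(j:ℤ)) := ⟨hnjne0, by rw [abs_le]; omega⟩
  have hniM : inPM n (-(i:ℤ)) := ⟨by omega, by rw [abs_le]; omega⟩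
  have hdki : dkey n (i:ℤ) = i := by unfold dkey; split_ifs <;> omega
  have hdkj : dkey n (j:ℤ) = j := by unfold dkey; split_ifs <;> omega
  have hdknj : dkey n (-(j:ℤ)) = 2*n+1-j := by unfold dkey; split_ifs <;> omega
  have hdkni : dkey n (-(i:ℤ)) = 2*n+1-i := by unfold dkey; split_ifs <;> omega
  have hdlt_ij : dlt n (i:ℤ) (j:ℤ) := by unfold dlt; rw [hdki, hdkj]; omega
  have hdlt_inj : dlt n (i:ℤ) (-(j:ℤ)) := by unfold dlt; rw [hdki, hdknj]; omega
  have hdlt_ini : dlt n (i:ℤ) (-(i:ℤ)) := by unfold dlt; rw [hdki, hdkni]; omega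
  -- nodup consequences
  have hsub : ((j:ℤ) :: -(j:ℤ) :: L').Nodup := by
    refine List.Nodup.sublist ?_ hnd
    rw [List.append_assoc]
    exact List.sublist_append_right _ _
  rw [List.nodup_cons, List.nodup_cons] at hsub
  have hL'j : ∀ q ∈ L', q ≠ (j:ℤ) ∧ q ≠ -(j:ℤ) := by
    intro q hq
    constructor
    · intro he; exact hsub.1 (by rw [← he]; exact List.mem_cons_of_mem _ hq)
    · intro he; exact hsub.2.1 (by rw [← he]; exact hq)
  have hmemL' : ∀ q ∈ L', inPM n q := by
    intro q hq; exact hmem q (by simp [hq])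
  suffices H : ∀ m : ℕ, ∀ u : Perm ℤ, IsSignedPerm n u →
      (2*(n:ℤ)+1 - dkey n (u⁻¹ (i:ℤ))).toNat ≤ m →
      hop n (i:ℤ) (L ++ [(j:ℤ), -(j:ℤ)] ++ L') u = hop n (i:ℤ) (L ++ [-(j:ℤ), (j:ℤ)] ++ L') u by
    exact H _ u hu le_rfl
  intro m
  induction m with
  | zero =>
    intro u hu hm
    have hb := dkey_bounds (sp_inv_mem hu hiM)
    omega
  | succ m ih =>
    intro u hu hm
    have huinv := sp_inv_mem hu hiM
    obtain ⟨hp1, hp2⟩ := dkey_bounds huinv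
    have hrev1 : (L ++ [(j:ℤ), -(j:ℤ)] ++ L').reverse
        = L'.reverse ++ (-(j:ℤ) :: (j:ℤ) :: L.reverse) := by simp
    have hrev2 : (L ++ [-(j:ℤ), (j:ℤ)] ++ L').reverse
        = L'.reverse ++ ((j:ℤ) :: -(j:ℤ) :: L.reverse) := by simp
    rcases hf : L'.reverse.find? (fun q => decide (HopStep n u (i:ℤ) q)) with _ | q
    · -- no element of L' is eligible
      have hnotL' : ∀ q ∈ L', ¬ HopStep n u (i:ℤ) q := by
        rw [List.find?_eq_none] at hf
        intro q hq
        have := hf q (by simp [hq])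
        simpa using this
      by_cases hPj : HopStep n u (i:ℤ) ((j:ℤ))
      · by_cases hPnj : HopStep n u (i:ℤ) (-(j:ℤ))
        · -- CASE D : both eligible
          obtain ⟨-, -, hltj, hlej⟩ := hPj
          have hPneg : dkey n (u⁻¹ (-(j:ℤ))) = 2*n+1 - dkey n (u⁻¹ (j:ℤ)) := by
            rw [sp_inv_neg hu, dkey_neg (sp_inv_mem hu hjM)]
          have hltnj := hPnj.2.2.1
          rw [hPneg] at hltnj
          obtain ⟨hP1, hP2⟩ := dkey_bounds (sp_inv_mem hu hjM)
          have hPj' : HopStep n u (i:ℤ) ((j:ℤ)) := ⟨hjM, hdlt_ij, hltj, hlej⟩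
          have hnineg : dkey n (u⁻¹ (-(i:ℤ))) = 2*n+1 - dkey n (u⁻¹ (i:ℤ)) := by
            rw [sp_inv_neg hu, dkey_neg huinv]
          have hnotniL' : -(i:ℤ) ∉ L' := by
            intro hmm
            exact hnotL' _ hmm ⟨hniM, hdlt_ini, by omega, by omega⟩
          -- values of the two swaps
          have hAi : hswap (i:ℤ) (-(j:ℤ)) (i:ℤ) = -(j:ℤ) := by
            rw [hswap_apply _ _ hine0 hnjne0]; split_ifs <;> omega
          have hAj : hswap (i:ℤ) (-(j:ℤ)) (j:ℤ) = -(i:ℤ) := by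
            rw [hswap_apply _ _ hine0 hnjne0]; split_ifs <;> omega
          have hAnj : hswap (i:ℤ) (-(j:ℤ)) (-(j:ℤ)) = (i:ℤ) := by
            rw [hswap_apply _ _ hine0 hnjne0]; split_ifs <;> omega
          have hBi : hswap (i:ℤ) ((j:ℤ)) (i:ℤ) = (j:ℤ) := by
            rw [hswap_apply _ _ hine0 hjne0]; split_ifs <;> omega
          have hBj : hswap (i:ℤ) ((j:ℤ)) (j:ℤ) = (i:ℤ) := by
            rw [hswap_apply _ _ hine0 hjne0]; split_ifs <;> omega
          have hBnj : hswap (i:ℤ) ((j:ℤ)) (-(j:ℤ)) = -(i:ℤ) := by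
            rw [hswap_apply _ _ hine0 hjne0]; split_ifs <;> omega
          have hAni : hswap (i:ℤ) (-(j:ℤ)) (-(i:ℤ)) = (j:ℤ) := by
            rw [hswap_apply _ _ hine0 hnjne0]; split_ifs <;> omega
          have hBni : hswap (i:ℤ) ((j:ℤ)) (-(i:ℤ)) = -(j:ℤ) := by
            rw [hswap_apply _ _ hine0 hjne0]; split_ifs <;> omega
          -- L' not eligible for w₁ = A * u
          have hf1 : L'.reverse.find?
              (fun q => decide (HopStep n (hswap (i:ℤ) (-(j:ℤ)) * u) (i:ℤ) q)) = none := by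
            rw [List.find?_eq_none]
            intro q hq
            rw [List.mem_reverse] at hq
            simp only [decide_eq_true_eq]
            rintro ⟨hqm, hqlt, hqpos, -⟩
            rw [hswap_mul_inv_apply hine0 hnjne0, hswap_mul_inv_apply hine0 hnjne0, hAi] at hqpos
            obtain ⟨hqj, hqnj⟩ := hL'j q hq
            rcases eq_or_ne q (i:ℤ) with rfl | hqi
            · unfold dlt at hqlt; omega
            · rcases eq_or_ne q (-(i:ℤ)) with rfl | hqni
              · exact hnotniL' hq
              · have hAq : hswap (i:ℤ) (-(j:ℤ)) q = q := by
                  rw [hswap_apply _ _ hine0 hnjne0]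
                  have : q ≠ -(-(j:ℤ)) := by omega
                  split_ifs <;> omega
                rw [hAq] at hqpos
                obtain ⟨hq1, hq2⟩ := dkey_bounds (sp_inv_mem hu hqm)
                exact hnotL' q hq ⟨hqm, hqlt, by omega, by omega⟩
          have hC1 : HopStep n (hswap (i:ℤ) (-(j:ℤ)) * u) (i:ℤ) ((j:ℤ)) := by
            refine ⟨hjM, hdlt_ij, ?_, ?_⟩ <;>
              simp only [hswap_mul_inv_apply hine0 hnjne0, hAi, hAj] <;> omega
          have hB1 : ¬ HopStep n (hswap (i:ℤ) (-(j:ℤ)) * u) (i:ℤ) (-(j:ℤ)) := by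
            rintro ⟨-, -, hx, -⟩
            rw [hswap_mul_inv_apply hine0 hnjne0, hswap_mul_inv_apply hine0 hnjne0, hAi, hAnj] at hx
            omega
          -- L' not eligible for w₂ = B * u
          have hf2 : L'.reverse.find?
              (fun q => decide (HopStep n (hswap (i:ℤ) ((j:ℤ)) * u) (i:ℤ) q)) = none := by
            rw [List.find?_eq_none]
            intro q hq
            rw [List.mem_reverse] at hq
            simp only [decide_eq_true_eq]
            rintro ⟨hqm, hqlt, hqpos, -⟩
            rw [hswap_mul_inv_apply hine0 hjne0, hswap_mul_inv_apply hine0 hjne0, hBi] at hqpos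
            obtain ⟨hqj, hqnj⟩ := hL'j q hq
            rcases eq_or_ne q (i:ℤ) with rfl | hqi
            · unfold dlt at hqlt; omega
            · rcases eq_or_ne q (-(i:ℤ)) with rfl | hqni
              · exact hnotniL' hq
              · have hBq : hswap (i:ℤ) ((j:ℤ)) q = q := by
                  rw [hswap_apply _ _ hine0 hjne0]
                  split_ifs <;> omega
                rw [hBq] at hqpos
                obtain ⟨hq1, hq2⟩ := dkey_bounds (sp_inv_mem hu hqm)
                exact hnotL' q hq ⟨hqm, hqlt, by omega, by omega⟩
          have hC2 : HopStep n (hswap (i:ℤ) ((j:ℤ)) * u) (i:ℤ) (-(j:ℤ)) := by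
            refine ⟨hnjM, hdlt_inj, ?_, ?_⟩ <;>
              simp only [hswap_mul_inv_apply hine0 hjne0, hBi, hBnj] <;> omega
          have hB2 : ¬ HopStep n (hswap (i:ℤ) ((j:ℤ)) * u) (i:ℤ) ((j:ℤ)) := by
            rintro ⟨-, -, hx, -⟩
            rw [hswap_mul_inv_apply hine0 hjne0, hswap_mul_inv_apply hine0 hjne0, hBi, hBj] at hx
            omega
          -- the find? computations
          have e1 : (L ++ [(j:ℤ), -(j:ℤ)] ++ L').reverse.find?
              (fun q => decide (HopStep n u (i:ℤ) q)) = some (-(j:ℤ)) := by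
            rw [hrev1, List.find?_append, hf, Option.none_or,
              List.find?_cons_of_pos (by simpa using hPnj)]
          have e1' : (L ++ [(j:ℤ), -(j:ℤ)] ++ L').reverse.find?
              (fun q => decide (HopStep n (hswap (i:ℤ) (-(j:ℤ)) * u) (i:ℤ) q)) = some ((j:ℤ)) := by
            rw [hrev1, List.find?_append, hf1, Option.none_or,
              List.find?_cons_of_neg (by simpa using hB1),
              List.find?_cons_of_pos (by simpa using hC1)]
          have e2 : (L ++ [-(j:ℤ), (j:ℤ)] ++ L').reverse.find?
              (fun q => decide (HopStep n u (i:ℤ) q)) = some ((j:ℤ)) := by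
            rw [hrev2, List.find?_append, hf, Option.none_or,
              List.find?_cons_of_pos (by simpa using hPj')]
          have e2' : (L ++ [-(j:ℤ), (j:ℤ)] ++ L').reverse.find?
              (fun q => decide (HopStep n (hswap (i:ℤ) ((j:ℤ)) * u) (i:ℤ) q)) = some (-(j:ℤ)) := by
            rw [hrev2, List.find?_append, hf2, Option.none_or,
              List.find?_cons_of_neg (by simpa using hB2),
              List.find?_cons_of_pos (by simpa using hC2)]
          have hcomm : hswap (i:ℤ) ((j:ℤ)) * (hswap (i:ℤ) (-(j:ℤ)) * u)
              = hswap (i:ℤ) (-(j:ℤ)) * (hswap (i:ℤ) ((j:ℤ)) * u) := by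
            have key : ∀ a : ℤ, hswap (i:ℤ) ((j:ℤ)) (hswap (i:ℤ) (-(j:ℤ)) a)
                = hswap (i:ℤ) (-(j:ℤ)) (hswap (i:ℤ) ((j:ℤ)) a) := by
              intro a
              rcases eq_or_ne a (i:ℤ) with rfl | h1
              · rw [hAi, hBnj, hBi, hAj]
              · rcases eq_or_ne a (-(i:ℤ)) with rfl | h2
                · rw [hAni, hBj, hBni, hAnj]
                · rcases eq_or_ne a ((j:ℤ)) with rfl | h3
                  · rw [hAj, hBni, hBj, hAi]
                  · rcases eq_or_ne a (-(j:ℤ)) with rfl | h4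
                    · rw [hAnj, hBi, hBnj, hAni]
                    · have ha : hswap (i:ℤ) (-(j:ℤ)) a = a := by
                        rw [hswap_apply _ _ hine0 hnjne0]; split_ifs <;> omega
                      have hb : hswap (i:ℤ) ((j:ℤ)) a = a := by
                        rw [hswap_apply _ _ hine0 hjne0]; split_ifs <;> omega
                      rw [ha, hb, ha]
            rw [← mul_assoc, ← mul_assoc]
            congr 1
            ext a
            simp only [Equiv.Perm.mul_apply]
            exact key a
          have hm1 := hop_measure n (hswap (i:ℤ) (-(j:ℤ)) * u) (i:ℤ) (j:ℤ) hC1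
          have hm2 := hop_measure n u (i:ℤ) (-(j:ℤ)) hPnj
          rw [hcomm] at hm1
          rw [hop_some e1, hop_some e1', hop_some e2, hop_some e2', hcomm]
          refine ih _ (signed_mul (hswap_signed hiM hnjM)
            (signed_mul (hswap_signed hiM hjM) hu)) ?_
          omega
        · -- only j eligible
          have e1 : (L ++ [(j:ℤ), -(j:ℤ)] ++ L').reverse.find?
              (fun q => decide (HopStep n u (i:ℤ) q)) = some ((j:ℤ)) := by
            rw [hrev1, List.find?_append, hf, Option.none_or,
              List.find?_cons_of_neg (by simpa using hPnj),
              List.find?_cons_of_pos (by simpa using hPj)]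
          have e2 : (L ++ [-(j:ℤ), (j:ℤ)] ++ L').reverse.find?
              (fun q => decide (HopStep n u (i:ℤ) q)) = some ((j:ℤ)) := by
            rw [hrev2, List.find?_append, hf, Option.none_or,
              List.find?_cons_of_pos (by simpa using hPj)]
          rw [hop_some e1, hop_some e2]
          have hmj := hop_measure n u (i:ℤ) (j:ℤ) hPj
          exact ih _ (signed_mul (hswap_signed hiM hjM) hu) (by omega)
      · by_cases hPnj : HopStep n u (i:ℤ) (-(j:ℤ))
        · -- only -j eligible
          have e1 : (L ++ [(j:ℤ), -(j:ℤ)] ++ L').reverse.find?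
              (fun q => decide (HopStep n u (i:ℤ) q)) = some (-(j:ℤ)) := by
            rw [hrev1, List.find?_append, hf, Option.none_or,
              List.find?_cons_of_pos (by simpa using hPnj)]
          have e2 : (L ++ [-(j:ℤ), (j:ℤ)] ++ L').reverse.find?
              (fun q => decide (HopStep n u (i:ℤ) q)) = some (-(j:ℤ)) := by
            rw [hrev2, List.find?_append, hf, Option.none_or,
              List.find?_cons_of_neg (by simpa using hPj),
              List.find?_cons_of_pos (by simpa using hPnj)]
          rw [hop_some e1, hop_some e2]
          have hmj := hop_measure n u (i:ℤ) (-(j:ℤ)) hPnj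
          exact ih _ (signed_mul (hswap_signed hiM hnjM) hu) (by omega)
        · -- neither
          rcases hg : L.reverse.find? (fun q => decide (HopStep n u (i:ℤ) q)) with _ | q
          · rw [hop_none (by
                rw [hrev1, List.find?_append, hf, Option.none_or,
                  List.find?_cons_of_neg (by simpa using hPnj),
                  List.find?_cons_of_neg (by simpa using hPj), hg]),
              hop_none (by
                rw [hrev2, List.find?_append, hf, Option.none_or,
                  List.find?_cons_of_neg (by simpa using hPj),
                  List.find?_cons_of_neg (by simpa using hPnj), hg])]
          · have hq' : HopStep n u (i:ℤ) q := by
              have := List.find?_some hg; simpa using this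
            have e1 : (L ++ [(j:ℤ), -(j:ℤ)] ++ L').reverse.find?
                (fun q => decide (HopStep n u (i:ℤ) q)) = some q := by
              rw [hrev1, List.find?_append, hf, Option.none_or,
                List.find?_cons_of_neg (by simpa using hPnj),
                List.find?_cons_of_neg (by simpa using hPj), hg]
            have e2 : (L ++ [-(j:ℤ), (j:ℤ)] ++ L').reverse.find?
                (fun q => decide (HopStep n u (i:ℤ) q)) = some q := by
              rw [hrev2, List.find?_append, hf, Option.none_or,
                List.find?_cons_of_neg (by simpa using hPj),
                List.find?_cons_of_neg (by simpa using hPnj), hg]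
            rw [hop_some e1, hop_some e2]
            have hmq := hop_measure n u (i:ℤ) q hq'
            exact ih _ (signed_mul (hswap_signed hiM hq'.1) hu) (by omega)
    · -- some element of L' is eligible
      have hq' : HopStep n u (i:ℤ) q := by
        have := List.find?_some hf; simpa using this
      have e1 : (L ++ [(j:ℤ), -(j:ℤ)] ++ L').reverse.find?
          (fun q => decide (HopStep n u (i:ℤ) q)) = some q := by
        rw [hrev1, List.find?_append, hf]; rfl
      have e2 : (L ++ [-(j:ℤ), (j:ℤ)] ++ L').reverse.find?
          (fun q => decide (HopStep n u (i:ℤ) q)) = some q := by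
        rw [hrev2, List.find?_append, hf]; rfl
      rw [hop_some e1, hop_some e2]
      have hmq := hop_measure n u (i:ℤ) q hq'
      exact ih _ (signed_mul (hswap_signed hiM hq'.1) hu) (by omega)
end

section
/- For every 1 ≤ i ≤ n−1 and every w ∈ D_n, the Demazure product of the simple generator s_i with w satisfies s_i ⋆ w = h_{i, [i+1]}(s_i·w), where s_i·w is the ordinary product and [i+1] is the one-element list. -/
open Equiv

theorem Equiv.Perm.apply_inv_self {α : Type*} (f : Perm α) (x : α) : f (f⁻¹ x) = x :=
  f.apply_symm_apply x

theorem Equiv.Perm.inv_apply_self {α : Type*} (f : Perm α) (x : α) : f⁻¹ (f x) = x :=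
  f.symm_apply_apply x

namespace HopAux
open Finset

noncomputable def Rset (n : ℕ) : Finset (ℤ × ℤ) :=
  (Finset.Icc 1 (n:ℤ) ×ˢ Finset.Icc (-(n:ℤ)) (n:ℤ)).filter fun r => r.1 < |r.2|

def Rneg (x y : ℤ) : Prop := (|x| < |y| ∧ x < 0) ∨ (|y| ≤ |x| ∧ y < 0)

instance (x y : ℤ) : Decidable (Rneg x y) := by unfold Rneg; infer_instance

def negAt (w : Perm ℤ) (r : ℤ × ℤ) : Prop := Rneg (w⁻¹ r.1) (w⁻¹ r.2)

instance (w : Perm ℤ) (r : ℤ × ℤ) : Decidable (negAt w r) := by unfold negAt; infer_instance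

noncomputable def Dstat (n : ℕ) (w : Perm ℤ) : ℕ := ((Rset n).filter (negAt w)).card

def canon (p : ℤ × ℤ) : ℤ × ℤ :=
  if |p.1| < |p.2| then (if p.1 < 0 then (-p.1, -p.2) else p)
  else (if p.2 < 0 then (-p.2, -p.1) else (p.2, p.1))

def alphaR (n i : ℕ) : ℤ × ℤ := if i = n then ((n:ℤ)-1, (n:ℤ)) else ((i:ℤ), -((i:ℤ)+1))

lemma mem_Rset {n : ℕ} {r : ℤ × ℤ} :
    r ∈ Rset n ↔ 1 ≤ r.1 ∧ r.1 < |r.2| ∧ |r.2| ≤ (n:ℤ) := by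
  obtain ⟨a, y⟩ := r
  simp only [Rset, mem_filter, mem_product, mem_Icc]
  constructor
  · rintro ⟨⟨⟨h1, h2⟩, h3, h4⟩, h5⟩
    exact ⟨h1, h5, abs_le.2 ⟨h3, h4⟩⟩
  · rintro ⟨h1, h2, h3⟩
    have := abs_le.1 h3
    have h0 := abs_nonneg y
    exact ⟨⟨⟨h1, by omega⟩, this.1, this.2⟩, h2⟩

/-- signed perm basic facts -/
lemma signed_inv {n : ℕ} {w : Perm ℤ} (hw : IsSignedPerm n w) : IsSignedPerm n w⁻¹ := by
  constructor
  · intro a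
    apply w.injective
    rw [Perm.apply_inv_self, hw.1, Perm.apply_inv_self]
  · intro a ha
    have := hw.2 a ha
    calc w⁻¹ a = w⁻¹ (w a) := by rw [this]
    _ = a := Perm.inv_apply_self w a

lemma signed_zero {n : ℕ} {w : Perm ℤ} (hw : IsSignedPerm n w) : w 0 = 0 := by
  have := hw.1 0; simp at this; omega

lemma signed_ne_zero {n : ℕ} {w : Perm ℤ} (hw : IsSignedPerm n w) {a : ℤ} (ha : a ≠ 0) :
    w a ≠ 0 := by
  intro h
  exact ha (w.injective (h.trans (signed_zero hw).symm))

lemma signed_abs_le {n : ℕ} {w : Perm ℤ} (hw : IsSignedPerm n w) {a : ℤ} (ha : |a| ≤ (n:ℤ)) :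
    |w a| ≤ (n:ℤ) := by
  by_contra h
  push_neg at h
  have h2 := hw.2 (w a) h
  have h3 := w.injective h2
  rw [h3] at h
  omega

lemma signed_mul {n : ℕ} {u v : Perm ℤ} (hu : IsSignedPerm n u) (hv : IsSignedPerm n v) :
    IsSignedPerm n (u * v) := by
  constructor
  · intro a; simp only [Perm.mul_apply, hv.1, hu.1]
  · intro a ha; simp only [Perm.mul_apply, hv.2 a ha, hu.2 a ha]

lemma signed_one {n : ℕ} : IsSignedPerm n 1 := ⟨fun a => rfl, fun a _ => rfl⟩

end HopAux


namespace HopAux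

lemma sgen_apply_lt (n i : ℕ) (hi : 1 ≤ i) (hin : i ≠ n) (x : ℤ) :
    sgen n i x = if x = (i:ℤ) then (i:ℤ)+1 else if x = (i:ℤ)+1 then (i:ℤ)
      else if x = -(i:ℤ) then -((i:ℤ)+1) else if x = -((i:ℤ)+1) then -(i:ℤ) else x := by
  have hi' : 1 ≤ (i:ℤ) := by exact_mod_cast hi
  rw [sgen, if_neg hin]
  simp only [Perm.mul_apply, Equiv.swap_apply_def]
  split_ifs <;> omega

lemma sgen_apply_top (n : ℕ) (hn : 2 ≤ n) (x : ℤ) :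
    sgen n n x = if x = (n:ℤ)-1 then -(n:ℤ) else if x = -(n:ℤ) then (n:ℤ)-1
      else if x = (n:ℤ) then -((n:ℤ)-1) else if x = -((n:ℤ)-1) then (n:ℤ) else x := by
  have hn' : 2 ≤ (n:ℤ) := by exact_mod_cast hn
  rw [sgen, if_pos rfl]
  simp only [Perm.mul_apply, Equiv.swap_apply_def]
  split_ifs <;> omega

lemma sgen_signed (n i : ℕ) (hn : 2 ≤ n) (hi : 1 ≤ i) (hin : i ≤ n) :
    IsSignedPerm n (sgen n i) := by
  have hi' : 1 ≤ (i:ℤ) := by exact_mod_cast hi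
  have hin' : (i:ℤ) ≤ n := by exact_mod_cast hin
  have hn' : 2 ≤ (n:ℤ) := by exact_mod_cast hn
  by_cases h : i = n
  · rw [h]
    constructor
    · intro a; rw [sgen_apply_top n hn, sgen_apply_top n hn]; split_ifs <;> omega
    · intro a ha
      rcases abs_cases a with ⟨he, _⟩ | ⟨he, _⟩ <;> rw [he] at ha <;>
        [skip; skip] <;> rw [sgen_apply_top n hn] <;> split_ifs <;> omega
  · constructor
    · intro a; rw [sgen_apply_lt n i hi h, sgen_apply_lt n i hi h]; split_ifs <;> omega
    · intro a ha
      have : (i:ℤ) < n := lt_of_le_of_ne hin' (by exact_mod_cast h)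
      rcases abs_cases a with ⟨he, _⟩ | ⟨he, _⟩ <;> rw [he] at ha <;>
        rw [sgen_apply_lt n i hi h] <;> split_ifs <;> omega

lemma sgen_sq (n i : ℕ) (hn : 2 ≤ n) (hi : 1 ≤ i) (hin : i ≤ n) :
    sgen n i * sgen n i = 1 := by
  have hi' : 1 ≤ (i:ℤ) := by exact_mod_cast hi
  have hn' : 2 ≤ (n:ℤ) := by exact_mod_cast hn
  ext x
  simp only [Perm.mul_apply, Perm.one_apply]
  by_cases h : i = n
  · rw [h, sgen_apply_top n hn, sgen_apply_top n hn]; split_ifs <;> omega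
  · rw [sgen_apply_lt n i hi h, sgen_apply_lt n i hi h]; split_ifs <;> omega

lemma sgen_inv (n i : ℕ) (hn : 2 ≤ n) (hi : 1 ≤ i) (hin : i ≤ n) :
    (sgen n i)⁻¹ = sgen n i := inv_eq_of_mul_eq_one_right (sgen_sq n i hn hi hin)

end HopAux

namespace HopAux

lemma alphaR_mem (n i : ℕ) (hn : 2 ≤ n) (hi : 1 ≤ i) (hin : i ≤ n) :
    alphaR n i ∈ Rset n := by
  have hn' : 2 ≤ (n:ℤ) := by exact_mod_cast hn
  have hi' : 1 ≤ (i:ℤ) := by exact_mod_cast hi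
  have hin' : (i:ℤ) ≤ n := by exact_mod_cast hin
  rw [mem_Rset, alphaR]
  split_ifs with h
  · simp only
    rw [abs_of_nonneg (by omega)]
    omega
  · have : (i:ℤ) < n := lt_of_le_of_ne hin' (by exact_mod_cast h)
    simp only
    rw [abs_of_nonpos (by omega)]
    omega

lemma sgen_alphaR (n i : ℕ) (hn : 2 ≤ n) (hi : 1 ≤ i) (hin : i ≤ n) :
    sgen n i (alphaR n i).1 = -(alphaR n i).2 ∧ sgen n i (alphaR n i).2 = -(alphaR n i).1 := by
  have hn' : 2 ≤ (n:ℤ) := by exact_mod_cast hn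
  have hi' : 1 ≤ (i:ℤ) := by exact_mod_cast hi
  by_cases h : i = n
  · rw [h, alphaR, if_pos rfl]
    rw [sgen_apply_top n hn, sgen_apply_top n hn]
    constructor <;> [skip; skip] <;> simp only <;> split_ifs <;> omega
  · rw [alphaR, if_neg h]
    rw [sgen_apply_lt n i hi h, sgen_apply_lt n i hi h]
    constructor <;> [skip; skip] <;> simp only <;> split_ifs <;> omega

lemma sgen_pos_roots (n i : ℕ) (hn : 2 ≤ n) (hi : 1 ≤ i) (hin : i ≤ n) :
    ∀ r ∈ Rset n, r ≠ alphaR n i → ¬ Rneg (sgen n i r.1) (sgen n i r.2) := by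
  have hn' : 2 ≤ (n:ℤ) := by exact_mod_cast hn
  have hi' : 1 ≤ (i:ℤ) := by exact_mod_cast hi
  have hin' : (i:ℤ) ≤ n := by exact_mod_cast hin
  rintro ⟨a, y⟩ hr hne
  rw [mem_Rset] at hr
  obtain ⟨h1, h2, h3⟩ := hr
  simp only at h1 h2 h3
  have hα : ¬(a = (alphaR n i).1 ∧ y = (alphaR n i).2) := by
    rintro ⟨ha, hy⟩; exact hne (Prod.ext ha hy)
  simp only [Rneg, not_or, not_and, not_lt, not_le]
  by_cases h : i = n
  · rw [h] at hα ⊢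
    rw [alphaR, if_pos rfl] at hα
    simp only at hα
    rw [sgen_apply_top n hn, sgen_apply_top n hn]
    simp only [Int.abs_eq_natAbs] at *
    split_ifs <;> omega
  · rw [alphaR, if_neg h] at hα
    simp only at hα
    have hlt : (i:ℤ) < n := lt_of_le_of_ne hin' (by exact_mod_cast h)
    rw [sgen_apply_lt n i hi h, sgen_apply_lt n i hi h]
    simp only [Int.abs_eq_natAbs] at *
    split_ifs <;> omega

end HopAux

namespace HopAux

lemma Rneg_swap {x y : ℤ} (h : |x| ≠ |y|) : Rneg x y ↔ Rneg y x := by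
  unfold Rneg; omega

lemma Rneg_neg_rev {x y : ℤ} (hx : x ≠ 0) (hy : y ≠ 0) (h : |x| ≠ |y|) :
    Rneg (-y) (-x) ↔ ¬ Rneg x y := by
  unfold Rneg
  simp only [abs_neg]
  omega

lemma signed_abs_ne {n : ℕ} {v : Perm ℤ} (hv : IsSignedPerm n v) {p q : ℤ}
    (h : |p| ≠ |q|) : |v p| ≠ |v q| := by
  intro hc
  rcases abs_eq_abs.1 hc with hc | hc
  · exact h (by rw [v.injective hc])
  · have : v p = v (-q) := by rw [hv.1]; exact hc
    have := v.injective this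
    rw [this, abs_neg] at h
    exact h rfl

lemma canon_fst {a y : ℤ} (h1 : 1 ≤ a) (h2 : a < |y|) : canon (a, y) = (a, y) := by
  unfold canon
  simp only
  rw [if_pos (by rw [abs_of_pos (by omega : (0:ℤ) < a)]; omega), if_neg (by omega)]

lemma canon_snd {a y : ℤ} (h1 : 1 ≤ a) (h2 : a < |y|) : canon (y, a) = (a, y) := by
  unfold canon
  simp only
  rw [if_neg (by rw [abs_of_pos (by omega : (0:ℤ) < a)]; omega), if_neg (by omega)]

lemma canon_of_not_Rneg {x y : ℤ} (hx : x ≠ 0) (hy : y ≠ 0) (hxy : |x| ≠ |y|)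
    (h : ¬ Rneg x y) :
    (|x| < |y| ∧ 1 ≤ x ∧ canon (x, y) = (x, y)) ∨
    (|y| < |x| ∧ 1 ≤ y ∧ canon (x, y) = (y, x)) := by
  unfold Rneg at h
  rcases lt_or_gt_of_ne hxy with hlt | hgt
  · left
    refine ⟨hlt, by omega, ?_⟩
    unfold canon
    simp only
    rw [if_pos hlt, if_neg (by omega)]
  · right
    refine ⟨hgt, by omega, ?_⟩
    unfold canon
    simp only
    rw [if_neg (by omega), if_neg (by omega)]

lemma card_step (n : ℕ) (s w : Perm ℤ)
    (hw : IsSignedPerm n w) (hs : IsSignedPerm n s)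
    (hs2 : s * s = 1)
    (α : ℤ × ℤ) (hα : α ∈ Rset n)
    (hroots : ∀ r ∈ Rset n, r ≠ α → ¬ Rneg (s r.1) (s r.2))
    (hsα : s (α.1) = -α.2 ∧ s (α.2) = -α.1) :
    (negAt w α → Dstat n w = Dstat n (s * w) + 1) ∧
    (¬ negAt w α → Dstat n (s * w) = Dstat n w + 1) := by
  classical
  have hss : ∀ x, s (s x) = x := fun x => by rw [← Perm.mul_apply, hs2, Perm.one_apply]
  have hsinv : s⁻¹ = s := inv_eq_of_mul_eq_one_right hs2
  have hswinv : ∀ x, (s * w)⁻¹ x = w⁻¹ (s x) := by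
    intro x; rw [mul_inv_rev, Perm.mul_apply, hsinv]
  have hwinv := signed_inv hw
  -- facts about α
  have hαm := mem_Rset.1 hα
  have hα1 : α.1 ≠ 0 := by omega
  have hα2 : α.2 ≠ 0 := by
    intro h; rw [h] at hαm; simp only [abs_zero] at hαm; omega
  have hα12 : |α.1| ≠ |α.2| := by
    simp only [Int.abs_eq_natAbs] at *; omega
  -- σ fixes α
  have hσα : canon (s α.1, s α.2) = α := by
    rw [hsα.1, hsα.2]
    unfold canon
    simp only [abs_neg]
    rw [if_neg (by simp only [Int.abs_eq_natAbs] at *; omega),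
        if_pos (by omega)]
    simp
  -- the main claim
  have claim : ∀ r ∈ (Rset n).erase α,
      canon (s r.1, s r.2) ∈ (Rset n).erase α ∧
      canon (s (canon (s r.1, s r.2)).1, s (canon (s r.1, s r.2)).2) = r ∧
      (negAt (s * w) r ↔ negAt w (canon (s r.1, s r.2))) := by
    rintro ⟨a, b⟩ hr
    rw [Finset.mem_erase] at hr
    obtain ⟨hne, hmem⟩ := hr
    have hm := mem_Rset.1 hmem
    simp only at hm
    have ha0 : a ≠ 0 := by omega
    have hb0 : b ≠ 0 := by
      intro h; rw [h] at hm; simp only [abs_zero] at hm; omega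
    have hab : |a| ≠ |b| := by simp only [Int.abs_eq_natAbs] at *; omega
    have hR : ¬ Rneg (s a) (s b) := hroots (a, b) hmem hne
    have hx0 : s a ≠ 0 := signed_ne_zero hs ha0
    have hy0 : s b ≠ 0 := signed_ne_zero hs hb0
    have hxyne : |s a| ≠ |s b| := signed_abs_ne hs hab
    have hxn : |s a| ≤ (n:ℤ) := signed_abs_le hs
      (by rw [abs_of_pos (by omega : (0:ℤ) < a)]; omega)
    have hyn : |s b| ≤ (n:ℤ) := signed_abs_le hs hm.2.2
    have habne : |w⁻¹ (s a)| ≠ |w⁻¹ (s b)| := signed_abs_ne hwinv hxyne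
    simp only
    rcases canon_of_not_Rneg hx0 hy0 hxyne hR with ⟨hlt, hpos, hc⟩ | ⟨hlt, hpos, hc⟩
    · rw [hc]
      have hmem2 : ((s a, s b) : ℤ × ℤ) ∈ Rset n := by
        rw [mem_Rset]
        refine ⟨hpos, ?_, hyn⟩
        simp only
        rw [abs_of_pos (by omega : (0:ℤ) < s a)] at hlt
        exact hlt
      have hback : canon (s (s a), s (s b)) = (a, b) := by
        rw [hss, hss]
        exact canon_fst (by omega) (by omega)
      refine ⟨Finset.mem_erase.2 ⟨?_, hmem2⟩, hback, ?_⟩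
      · intro hcα
        have hthis : canon (s α.1, s α.2) = (a, b) := by rw [← hcα]; exact hback
        rw [hσα] at hthis
        exact hne hthis.symm
      · unfold negAt
        simp only
        rw [hswinv, hswinv]
    · rw [hc]
      have hmem2 : ((s b, s a) : ℤ × ℤ) ∈ Rset n := by
        rw [mem_Rset]
        refine ⟨hpos, ?_, hxn⟩
        simp only
        rw [abs_of_pos (by omega : (0:ℤ) < s b)] at hlt
        exact hlt
      have hback : canon (s (s b), s (s a)) = (a, b) := by
        rw [hss, hss]
        exact canon_snd (by omega) (by omega)
      refine ⟨Finset.mem_erase.2 ⟨?_, hmem2⟩, hback, ?_⟩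
      · intro hcα
        have hthis : canon (s α.1, s α.2) = (a, b) := by rw [← hcα]; exact hback
        rw [hσα] at hthis
        exact hne hthis.symm
      · unfold negAt
        simp only
        rw [hswinv, hswinv]
        exact Rneg_swap habne
  -- cardinality of the erased parts agree
  have hcard : (((Rset n).erase α).filter (negAt (s * w))).card
      = (((Rset n).erase α).filter (negAt w)).card := by
    apply Finset.card_nbij' (fun r => canon (s r.1, s r.2)) (fun r => canon (s r.1, s r.2))
    · intro r hr
      rw [Finset.mem_coe, Finset.mem_filter] at hr ⊢
      obtain ⟨h1, h2⟩ := hr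
      obtain ⟨c1, c2, c3⟩ := claim r h1
      exact ⟨c1, c3.1 h2⟩
    · intro r hr
      rw [Finset.mem_coe, Finset.mem_filter] at hr ⊢
      obtain ⟨h1, h2⟩ := hr
      obtain ⟨c1, c2, c3⟩ := claim r h1
      obtain ⟨d1, d2, d3⟩ := claim _ c1
      rw [c2] at d3
      exact ⟨c1, d3.2 h2⟩
    · intro r hr
      rw [Finset.mem_coe, Finset.mem_filter] at hr
      exact (claim r hr.1).2.1
    · intro r hr
      rw [Finset.mem_coe, Finset.mem_filter] at hr
      exact (claim r hr.1).2.1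
  -- decomposition
  have hdecomp : ∀ v : Perm ℤ, ((Rset n).filter (negAt v)).card
      = (((Rset n).erase α).filter (negAt v)).card + (if negAt v α then 1 else 0) := by
    intro v
    rw [Finset.filter_erase]
    by_cases hv : negAt v α
    · rw [if_pos hv, Finset.card_erase_of_mem (Finset.mem_filter.2 ⟨hα, hv⟩)]
      have : 0 < ((Rset n).filter (negAt v)).card :=
        Finset.card_pos.2 ⟨α, Finset.mem_filter.2 ⟨hα, hv⟩⟩
      omega
    · rw [if_neg hv, Finset.erase_eq_of_notMem
        (fun hmem => hv (Finset.mem_filter.1 hmem).2), add_zero]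
  -- α flips
  have hflip : negAt (s * w) α ↔ ¬ negAt w α := by
    unfold negAt
    rw [hswinv, hswinv, hsα.1, hsα.2, hwinv.1, hwinv.1]
    exact Rneg_neg_rev (signed_ne_zero hwinv hα1) (signed_ne_zero hwinv hα2)
      (signed_abs_ne hwinv hα12)
  have e1 := hdecomp w
  have e2 := hdecomp (s * w)
  unfold Dstat
  constructor
  · intro hneg
    rw [if_pos hneg] at e1
    rw [if_neg (by rw [hflip]; exact fun h => h hneg)] at e2
    omega
  · intro hneg
    rw [if_neg hneg] at e1
    rw [if_pos (hflip.2 hneg)] at e2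
    omega

end HopAux



namespace HopAux

lemma wordProd_nil (n : ℕ) : wordProd n [] = 1 := rfl

lemma wordProd_cons (n j : ℕ) (l : List ℕ) :
    wordProd n (j :: l) = sgen n j * wordProd n l := by
  unfold wordProd
  rw [List.map_cons, List.prod_cons]

lemma dstat_sgen (n i : ℕ) (hn : 2 ≤ n) (hi : 1 ≤ i) (hin : i ≤ n) (w : Perm ℤ)
    (hw : IsSignedPerm n w) :
    (negAt w (alphaR n i) → Dstat n w = Dstat n (sgen n i * w) + 1) ∧
    (¬ negAt w (alphaR n i) → Dstat n (sgen n i * w) = Dstat n w + 1) :=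
  card_step n (sgen n i) w hw (sgen_signed n i hn hi hin) (sgen_sq n i hn hi hin)
    (alphaR n i) (alphaR_mem n i hn hi hin) (sgen_pos_roots n i hn hi hin)
    (sgen_alphaR n i hn hi hin)

lemma dstat_one (n : ℕ) : Dstat n 1 = 0 := by
  unfold Dstat
  rw [Finset.card_eq_zero, Finset.filter_eq_empty_iff]
  rintro ⟨a, b⟩ hr
  rw [mem_Rset] at hr
  unfold negAt Rneg
  simp only [inv_one, Perm.one_apply]
  simp only [Int.abs_eq_natAbs] at *
  omega

lemma dstat_word (n : ℕ) (hn : 2 ≤ n) (l : List ℕ) (hl : ∀ j ∈ l, 1 ≤ j ∧ j ≤ n) :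
    IsSignedPerm n (wordProd n l) ∧ Dstat n (wordProd n l) ≤ l.length := by
  induction l with
  | nil => exact ⟨signed_one, by rw [wordProd_nil, dstat_one]; simp⟩
  | cons j l ih =>
    have hj := hl j List.mem_cons_self
    have hl' : ∀ j ∈ l, 1 ≤ j ∧ j ≤ n := fun x hx => hl x (List.mem_cons_of_mem j hx)
    obtain ⟨ih1, ih2⟩ := ih hl'
    rw [wordProd_cons]
    refine ⟨signed_mul (sgen_signed n j hn hj.1 hj.2) ih1, ?_⟩
    have hst := dstat_sgen n j hn hj.1 hj.2 (wordProd n l) ih1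
    by_cases hneg : negAt (wordProd n l) (alphaR n j)
    · have := hst.1 hneg
      simp only [List.length_cons]
      omega
    · have := hst.2 hneg
      simp only [List.length_cons]
      omega

end HopAux

namespace HopAux

lemma top_sign (n : ℕ) (hn : 2 ≤ n) (v : ℤ) :
    (sgen n n v < 0) ↔
      ((v < 0 ∧ ¬(v = (n:ℤ)-1 ∨ v = (n:ℤ) ∨ v = -((n:ℤ)-1) ∨ v = -(n:ℤ))) ∨
       ((v = (n:ℤ)-1 ∨ v = (n:ℤ) ∨ v = -((n:ℤ)-1) ∨ v = -(n:ℤ)) ∧ ¬(v < 0))) := by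
  have hn' : 2 ≤ (n:ℤ) := by exact_mod_cast hn
  rw [sgen_apply_top n hn]
  split_ifs <;> omega

lemma sgen_mul_even (n i : ℕ) (hn : 2 ≤ n) (hi : 1 ≤ i) (hin : i ≤ n) (w : Perm ℤ)
    (hw : IsEvenSignedPerm n w) : IsEvenSignedPerm n (sgen n i * w) := by
  classical
  refine ⟨signed_mul (sgen_signed n i hn hi hin) hw.1, ?_⟩
  by_cases h : i = n
  case neg =>
    have hiff : ∀ p, (sgen n i * w) p < 0 ↔ w p < 0 := by
      intro p
      rw [Perm.mul_apply, sgen_apply_lt n i hi h]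
      have hi' : 1 ≤ (i:ℤ) := by exact_mod_cast hi
      split_ifs <;> omega
    have heq : ((Finset.Icc (1:ℤ) (n:ℤ)).filter fun p => (sgen n i * w) p < 0)
        = ((Finset.Icc (1:ℤ) (n:ℤ)).filter fun p => w p < 0) :=
      Finset.filter_congr (fun p _ => by rw [hiff p])
    rw [heq]
    exact hw.2
  case pos =>
    rw [h]
    have hn' : 2 ≤ (n:ℤ) := by exact_mod_cast hn
    set F := (Finset.Icc (1:ℤ) (n:ℤ)).filter (fun p => w p < 0) with hF
    set D := (Finset.Icc (1:ℤ) (n:ℤ)).filter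
      (fun p => w p = (n:ℤ)-1 ∨ w p = (n:ℤ) ∨ w p = -((n:ℤ)-1) ∨ w p = -(n:ℤ)) with hD
    set G := (Finset.Icc (1:ℤ) (n:ℤ)).filter (fun p => (sgen n n * w) p < 0) with hG
    have hGD : G = (F \ D) ∪ (D \ F) := by
      ext p
      by_cases hp : p ∈ Finset.Icc (1:ℤ) (n:ℤ)
      · simp only [hG, hF, hD, Finset.mem_union, Finset.mem_sdiff, Finset.mem_filter,
          hp, true_and]
        rw [Perm.mul_apply, top_sign n hn (w p)]
        try tauto
      · simp only [hG, hF, hD, Finset.mem_union, Finset.mem_sdiff, Finset.mem_filter, hp,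
          false_and, false_or, not_false_iff, and_true]
    -- card D = 2
    have hwinv := signed_inv hw.1
    have hq1 : w⁻¹ ((n:ℤ)-1) ≠ 0 := signed_ne_zero hwinv (by omega)
    have hq2 : w⁻¹ (n:ℤ) ≠ 0 := signed_ne_zero hwinv (by omega)
    have hq1n : |w⁻¹ ((n:ℤ)-1)| ≤ (n:ℤ) := signed_abs_le hwinv (by rw [abs_of_pos] <;> omega)
    have hq2n : |w⁻¹ (n:ℤ)| ≤ (n:ℤ) := signed_abs_le hwinv (by rw [abs_of_pos] <;> omega)
    have hvals : ∀ v p : ℤ, v ≠ 0 → 1 ≤ p → ((w p = v ∨ w p = -v) ↔ p = |w⁻¹ v|) := by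
      intro v p hv hp
      constructor
      · rintro (hpv | hpv)
        · have : w⁻¹ v = p := by rw [← hpv, Perm.inv_apply_self]
          rw [this, abs_of_pos (by omega)]
        · have : w⁻¹ (-v) = p := by rw [← hpv, Perm.inv_apply_self]
          rw [hwinv.1] at this
          rw [show w⁻¹ v = -p by omega, abs_neg, abs_of_pos (by omega)]
      · intro hpv
        rcases lt_or_gt_of_ne (show w⁻¹ v ≠ 0 from signed_ne_zero hwinv hv) with hq | hq
        · right
          rw [abs_of_neg hq] at hpv
          have : w p = w (-(w⁻¹ v)) := by rw [hpv]
          rw [hw.1.1, Perm.apply_inv_self] at this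
          exact this
        · left
          rw [abs_of_pos hq] at hpv
          rw [hpv, Perm.apply_inv_self]
    have hDset : D = {|w⁻¹ ((n:ℤ)-1)|, |w⁻¹ (n:ℤ)|} := by
      ext p
      simp only [hD, Finset.mem_filter, Finset.mem_Icc, Finset.mem_insert,
        Finset.mem_singleton]
      constructor
      · rintro ⟨⟨hp1, hp2⟩, hch⟩
        rcases hch with hc | hc | hc | hc
        · exact Or.inl ((hvals ((n:ℤ)-1) p (by omega) hp1).1 (Or.inl hc))
        · exact Or.inr ((hvals (n:ℤ) p (by omega) hp1).1 (Or.inl hc))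
        · exact Or.inl ((hvals ((n:ℤ)-1) p (by omega) hp1).1 (Or.inr hc))
        · exact Or.inr ((hvals (n:ℤ) p (by omega) hp1).1 (Or.inr hc))
      · rintro (hp | hp)
        · have hp1 : 1 ≤ p := by rw [hp]; have := abs_pos.2 hq1; omega
          have hp2 : p ≤ (n:ℤ) := by rw [hp]; exact hq1n
          rcases (hvals ((n:ℤ)-1) p (by omega) hp1).2 hp with hc | hc
          · exact ⟨⟨hp1, hp2⟩, Or.inl hc⟩
          · exact ⟨⟨hp1, hp2⟩, Or.inr (Or.inr (Or.inl hc))⟩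
        · have hp1 : 1 ≤ p := by rw [hp]; have := abs_pos.2 hq2; omega
          have hp2 : p ≤ (n:ℤ) := by rw [hp]; exact hq2n
          rcases (hvals (n:ℤ) p (by omega) hp1).2 hp with hc | hc
          · exact ⟨⟨hp1, hp2⟩, Or.inr (Or.inl hc)⟩
          · exact ⟨⟨hp1, hp2⟩, Or.inr (Or.inr (Or.inr hc))⟩
    have hab : |w⁻¹ ((n:ℤ)-1)| ≠ |w⁻¹ (n:ℤ)| := by
      intro hc
      rcases abs_eq_abs.1 hc with hc | hc
      · have := congrArg w hc
        rw [Perm.apply_inv_self, Perm.apply_inv_self] at this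
        omega
      · have : w⁻¹ ((n:ℤ)-1) = w⁻¹ (-(n:ℤ)) := by rw [hwinv.1]; exact hc
        have := congrArg w this
        rw [Perm.apply_inv_self, Perm.apply_inv_self] at this
        omega
    have hcardD : D.card = 2 := by
      rw [hDset, Finset.card_insert_of_notMem (by simpa using hab), Finset.card_singleton]
    have h1 : G.card = (F \ D).card + (D \ F).card := by
      rw [hGD]
      exact Finset.card_union_of_disjoint disjoint_sdiff_sdiff
    have h2 : (F \ D).card + (F ∩ D).card = F.card := Finset.card_sdiff_add_card_inter F D
    have h3 : (D \ F).card + (D ∩ F).card = D.card := Finset.card_sdiff_add_card_inter D F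
    have h4 : (F ∩ D).card = (D ∩ F).card := by rw [Finset.inter_comm]
    have hEF : Even F.card := hw.2
    rw [Nat.even_iff] at hEF ⊢
    omega

end HopAux


namespace HopAux

lemma dkey_lt_iff {n : ℕ} {x y : ℤ} (hx0 : x ≠ 0) (hxn : |x| ≤ (n:ℤ))
    (hy0 : y ≠ 0) (hyn : |y| ≤ (n:ℤ)) :
    dkey n x < dkey n y ↔
      ((0 < x ∧ 0 < y ∧ x < y) ∨ (x < 0 ∧ y < 0 ∧ x < y) ∨ (0 < x ∧ y < 0)) := by
  unfold dkey
  simp only [Int.abs_eq_natAbs] at *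
  split_ifs <;> omega

lemma negAt_alpha_iff (n i : ℕ) (hn : 2 ≤ n) (hi : 1 ≤ i) (hin : i < n) (w : Perm ℤ)
    (hw : IsSignedPerm n w) :
    ¬ negAt w (alphaR n i) ↔ dkey n (w⁻¹ (i:ℤ)) < dkey n (w⁻¹ ((i:ℤ)+1)) := by
  have hwinv := signed_inv hw
  have hi' : 1 ≤ (i:ℤ) := by exact_mod_cast hi
  have hin' : (i:ℤ) < n := by exact_mod_cast hin
  have hp0 : w⁻¹ (i:ℤ) ≠ 0 := signed_ne_zero hwinv (by omega)
  have hq0 : w⁻¹ ((i:ℤ)+1) ≠ 0 := signed_ne_zero hwinv (by omega)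
  have hpn : |w⁻¹ (i:ℤ)| ≤ (n:ℤ) := signed_abs_le hwinv (by rw [abs_of_pos] <;> omega)
  have hqn : |w⁻¹ ((i:ℤ)+1)| ≤ (n:ℤ) := signed_abs_le hwinv (by rw [abs_of_pos] <;> omega)
  have hpq : |w⁻¹ (i:ℤ)| ≠ |w⁻¹ ((i:ℤ)+1)| := by
    apply signed_abs_ne hwinv
    rw [abs_of_pos (by omega), abs_of_pos (by omega)]
    omega
  unfold negAt
  rw [alphaR, if_neg (by omega)]
  simp only
  rw [hwinv.1]
  unfold Rneg
  rw [dkey_lt_iff hp0 hpn hq0 hqn]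
  simp only [abs_neg, Int.abs_eq_natAbs] at *
  omega

lemma no_descent (n : ℕ) (hn : 2 ≤ n) (w : Perm ℤ) (hw : IsEvenSignedPerm n w)
    (h : ∀ i : ℕ, 1 ≤ i → i ≤ n → ¬ negAt w (alphaR n i)) : w = 1 := by
  have hwinv := signed_inv hw.1
  have hu : ∀ j : ℕ, 1 ≤ j → j ≤ n → w⁻¹ (j:ℤ) ≠ 0 ∧ |w⁻¹ (j:ℤ)| ≤ (n:ℤ) := by
    intro j h1 h2
    have h1' : 1 ≤ (j:ℤ) := by exact_mod_cast h1
    have h2' : (j:ℤ) ≤ n := by exact_mod_cast h2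
    exact ⟨signed_ne_zero hwinv (by omega),
      signed_abs_le hwinv (by rw [abs_of_pos] <;> omega)⟩
  have hchain : ∀ j : ℕ, 1 ≤ j → j < n → dkey n (w⁻¹ (j:ℤ)) < dkey n (w⁻¹ ((j:ℤ)+1)) :=
    fun j h1 h2 => (negAt_alpha_iff n j hn h1 h2 w hw.1).1 (h j h1 (le_of_lt h2))
  -- negativity propagates up
  have hprop : ∀ j : ℕ, 1 ≤ j → j < n → w⁻¹ (j:ℤ) < 0 → w⁻¹ ((j:ℤ)+1) < 0 := by
    intro j h1 h2 hneg
    have c := hchain j h1 h2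
    obtain ⟨a0, an⟩ := hu j h1 (le_of_lt h2)
    obtain ⟨b0, bn⟩ := hu (j+1) (by omega) (by omega)
    rw [show ((j+1:ℕ):ℤ) = (j:ℤ)+1 by push_cast; ring] at b0 bn
    rcases (dkey_lt_iff a0 an b0 bn).1 c with ⟨hx, _, _⟩ | ⟨_, hy, _⟩ | ⟨hx, _⟩ <;> omega
  have hproppar : ∀ j k : ℕ, 1 ≤ j → j ≤ k → k ≤ n → w⁻¹ (j:ℤ) < 0 → w⁻¹ (k:ℤ) < 0 := by
    intro j k h1 hjk hkn hneg
    induction k, hjk using Nat.le_induction with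
    | base => exact hneg
    | succ k hk ih =>
      have := hprop k (by omega) (by omega) (ih (by omega))
      rw [show ((k+1:ℕ):ℤ) = (k:ℤ)+1 by push_cast; ring]
      exact this
  rcases lt_or_gt_of_ne (hu n (by omega) le_rfl).1 with hneg | hpos
  · -- u n < 0
    rcases lt_or_gt_of_ne (hu (n-1) (by omega) (by omega)).1 with hneg' | hpos'
    · -- u (n-1) < 0 : contradict the s_n condition
      exfalso
      have hcond := h n (by omega) le_rfl
      unfold negAt at hcond
      rw [alphaR, if_pos rfl] at hcond
      simp only at hcond
      have c := hchain (n-1) (by omega) (by omega)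
      rw [show (((n-1:ℕ)):ℤ) = (n:ℤ)-1 by omega] at hneg' c
      rw [show ((n:ℤ)-1)+1 = (n:ℤ) by ring] at c
      obtain ⟨a0, an⟩ := hu (n-1) (by omega) (by omega)
      rw [show (((n-1:ℕ)):ℤ) = (n:ℤ)-1 by omega] at a0 an
      obtain ⟨b0, bn⟩ := hu n (by omega) le_rfl
      rcases (dkey_lt_iff a0 an b0 bn).1 c with ⟨hx, _, _⟩ | ⟨_, _, hlt⟩ | ⟨hx, _⟩
      · omega
      · apply hcond
        unfold Rneg
        simp only [Int.abs_eq_natAbs] at *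
        omega
      · omega
    · -- u (n-1) > 0, u n < 0 : exactly one negative value, contradict evenness
      exfalso
      have hallpos : ∀ j : ℕ, 1 ≤ j → j ≤ n-1 → 0 < w⁻¹ (j:ℤ) := by
        intro j h1 h2
        rcases lt_or_gt_of_ne (hu j h1 (by omega)).1 with hx | hx
        · exfalso
          have := hproppar j (n-1) h1 h2 (by omega) hx
          omega
        · exact hx
      have hF : ((Finset.Icc (1:ℤ) (n:ℤ)).filter fun p => w p < 0) = {-(w⁻¹ (n:ℤ))} := by
        ext p
        simp only [Finset.mem_filter, Finset.mem_Icc, Finset.mem_singleton]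
        constructor
        · rintro ⟨⟨hp1, hp2⟩, hpneg⟩
          have hj1 : 1 ≤ -(w p) := by omega
          have hj2 : -(w p) ≤ (n:ℤ) := by
            have := signed_abs_le hw.1
              (show |p| ≤ (n:ℤ) by simp only [Int.abs_eq_natAbs]; omega)
            simp only [Int.abs_eq_natAbs] at this
            omega
          -- j := -(w p) ∈ [1, n] has w⁻¹ j = -p < 0, so j must be n
          have hjn : -(w p) = (n:ℤ) := by
            by_contra hne
            have hj2' : -(w p) ≤ (n:ℤ)-1 := by omega
            have := hallpos (-(w p)).toNat (by omega) (by omega)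
            rw [Int.toNat_of_nonneg (by omega)] at this
            rw [hwinv.1, Perm.inv_apply_self] at this
            omega
          have : w⁻¹ (n:ℤ) = -p := by rw [← hjn, hwinv.1, Perm.inv_apply_self]
          omega
        · intro hp
          have hp1 : 1 ≤ p := by omega
          have hp2 : p ≤ (n:ℤ) := by
            have := (hu n (by omega) le_rfl).2
            simp only [Int.abs_eq_natAbs] at this ⊢
            omega
          refine ⟨⟨hp1, hp2⟩, ?_⟩
          have : w p = w (-(w⁻¹ (n:ℤ))) := by rw [hp]
          rw [hw.1.1, Perm.apply_inv_self] at this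
          omega
      have := hw.2
      rw [hF] at this
      simp at this
  · -- u n > 0 : w = 1
    have hallpos : ∀ j : ℕ, 1 ≤ j → j ≤ n → 0 < w⁻¹ (j:ℤ) := by
      intro j h1 h2
      rcases lt_or_gt_of_ne (hu j h1 h2).1 with hx | hx
      · exfalso
        have := hproppar j n h1 h2 le_rfl hx
        omega
      · exact hx
    have hlt : ∀ j : ℕ, 1 ≤ j → j < n → w⁻¹ (j:ℤ) < w⁻¹ ((j:ℤ)+1) := by
      intro j h1 h2
      have c := hchain j h1 h2
      obtain ⟨a0, an⟩ := hu j h1 (by omega)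
      obtain ⟨b0, bn⟩ := hu (j+1) (by omega) (by omega)
      rw [show ((j+1:ℕ):ℤ) = (j:ℤ)+1 by push_cast; ring] at b0 bn
      have hb := hallpos (j+1) (by omega) (by omega)
      rw [show ((j+1:ℕ):ℤ) = (j:ℤ)+1 by push_cast; ring] at hb
      rcases (dkey_lt_iff a0 an b0 bn).1 c with ⟨_, _, hxy⟩ | ⟨_, hy, _⟩ | ⟨_, hy⟩ <;> omega
    have hge : ∀ j : ℕ, 1 ≤ j → j ≤ n → (j:ℤ) ≤ w⁻¹ (j:ℤ) := by
      intro j h1 h2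
      induction j with
      | zero => omega
      | succ j ih =>
        rcases Nat.eq_or_lt_of_le h1 with h1' | h1'
        · have := hallpos 1 le_rfl (by omega)
          simp only [← h1']
          push_cast
          push_cast at this
          omega
        · have hj1 : 1 ≤ j := by omega
          have := ih hj1 (by omega)
          have hl := hlt j hj1 (by omega)
          push_cast
          push_cast at this hl
          omega
    have hle : ∀ d j : ℕ, 1 ≤ j → j + d = n → w⁻¹ (j:ℤ) ≤ (j:ℤ) := by
      intro d
      induction d with
      | zero =>
        intro j h1 h2
        have := (hu j h1 (by omega)).2
        have hp := hallpos j h1 (by omega)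
        simp only [Int.abs_eq_natAbs] at this
        omega
      | succ d ih =>
        intro j h1 h2
        have := ih (j+1) (by omega) (by omega)
        have hl := hlt j h1 (by omega)
        push_cast at this hl ⊢
        omega
    have heq : ∀ a : ℤ, 1 ≤ a → a ≤ (n:ℤ) → w⁻¹ a = a := by
      intro a h1 h2
      have h1' : 1 ≤ a.toNat := by omega
      have h2' : a.toNat ≤ n := by omega
      have hg := hge a.toNat h1' h2'
      have hl := hle (n - a.toNat) a.toNat h1' (by omega)
      rw [Int.toNat_of_nonneg (by omega)] at hg hl
      omega
    have hinv1 : w⁻¹ = 1 := by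
      ext a
      simp only [Perm.one_apply]
      rcases lt_trichotomy a 0 with ha | ha | ha
      · by_cases han : -(n:ℤ) ≤ a
        · have : w⁻¹ (-(-a)) = -(w⁻¹ (-a)) := hwinv.1 (-a)
          rw [neg_neg] at this
          rw [this, heq (-a) (by omega) (by omega)]
          ring
        · exact hwinv.2 a (by rw [abs_of_neg ha]; omega)
      · rw [ha, signed_zero hwinv]
      · by_cases han : a ≤ (n:ℤ)
        · exact heq a (by omega) han
        · exact hwinv.2 a (by rw [abs_of_pos ha]; omega)
    have : w = 1 := by
      rw [← inv_inv w, hinv1, inv_one]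
    exact this

end HopAux


namespace HopAux

lemma exists_word (n : ℕ) (hn : 2 ≤ n) (w : Perm ℤ) (hw : IsEvenSignedPerm n w) :
    ∃ l : List ℕ, (∀ j ∈ l, 1 ≤ j ∧ j ≤ n) ∧ l.length = Dstat n w ∧ wordProd n l = w := by
  generalize hm : Dstat n w = m
  induction m using Nat.strong_induction_on generalizing w with
  | _ m ih =>
  by_cases hd : ∃ i : ℕ, 1 ≤ i ∧ i ≤ n ∧ negAt w (alphaR n i)
  · obtain ⟨i, hi1, hi2, hneg⟩ := hd
    have hw' := sgen_mul_even n i hn hi1 hi2 w hw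
    have hst := (dstat_sgen n i hn hi1 hi2 w hw.1).1 hneg
    obtain ⟨l, hl1, hl2, hl3⟩ := ih (Dstat n (sgen n i * w)) (by omega) (sgen n i * w) hw' rfl
    refine ⟨i :: l, ?_, ?_, ?_⟩
    · intro j hj
      rcases List.mem_cons.1 hj with hj | hj
      · rw [hj]; exact ⟨hi1, hi2⟩
      · exact hl1 j hj
    · simp only [List.length_cons]
      omega
    · rw [wordProd_cons, hl3, ← mul_assoc, sgen_sq n i hn hi1 hi2, one_mul]
  · push_neg at hd
    have hw1 : w = 1 := no_descent n hn w hw (fun i h1 h2 => hd i h1 h2)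
    refine ⟨[], by simp, ?_, by rw [wordProd_nil, hw1]⟩
    rw [hw1] at hm
    rw [dstat_one] at hm
    simp [← hm]

lemma dlength_eq (n : ℕ) (hn : 2 ≤ n) (w : Perm ℤ) (hw : IsEvenSignedPerm n w) :
    DLength n w = Dstat n w := by
  obtain ⟨l, hl1, hl2, hl3⟩ := exists_word n hn w hw
  apply le_antisymm
  · exact Nat.sInf_le ⟨l, hl1, hl2, hl3⟩
  · have hmem : l.length ∈ {k | ∃ l : List ℕ,
        (∀ i ∈ l, 1 ≤ i ∧ i ≤ n) ∧ l.length = k ∧ wordProd n l = w} := ⟨l, hl1, rfl, hl3⟩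
    apply le_csInf ⟨_, hmem⟩
    rintro k ⟨l', h1, h2, h3⟩
    have := (dstat_word n hn l' h1).2
    rw [h3] at this
    omega

end HopAux


namespace HopAux

lemma hop_none (n : ℕ) (t : ℤ) (L : List ℤ) (w : Perm ℤ)
    (h : L.reverse.find? (fun q => decide (HopStep n w t q)) = none) :
    hop n t L w = w := by
  rw [hop, h]

lemma hop_some (n : ℕ) (t : ℤ) (L : List ℤ) (w : Perm ℤ) (q : ℤ)
    (h : L.reverse.find? (fun q => decide (HopStep n w t q)) = some q) :
    hop n t L w = hop n t L (hswap t q * w) := by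
  rw [hop, h]

end HopAux

namespace HopAux

lemma dkey_ne {n : ℕ} {x y : ℤ} (hx0 : x ≠ 0) (hxn : |x| ≤ (n:ℤ))
    (hy0 : y ≠ 0) (hyn : |y| ≤ (n:ℤ)) (hxy : x ≠ y) : dkey n x ≠ dkey n y := by
  unfold dkey
  simp only [Int.abs_eq_natAbs] at *
  split_ifs <;> omega

lemma dkey_le {n : ℕ} {x : ℤ} (hx0 : x ≠ 0) (hxn : |x| ≤ (n:ℤ)) :
    dkey n x ≤ 2 * (n:ℤ) := by
  unfold dkey
  simp only [Int.abs_eq_natAbs] at *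
  split_ifs <;> omega

end HopAux

/-- for `1 ≤ i ≤ n-1` and `w ∈ D_n`, `s_i ⋆ w = h_{i,[i+1]}(s_i·w)`. -/
theorem demazure_simple_gen_as_hopping (n : ℕ) (hn : 2 ≤ n)
    (dem : Perm ℤ → Perm ℤ → Perm ℤ) (hdem : IsDemazure n dem)
    (i : ℕ) (hi : 1 ≤ i) (hi' : i ≤ n - 1)
    (w : Perm ℤ) (hw : IsEvenSignedPerm n w) :
    dem (sgen n i) w = hop n (i : ℤ) [(i : ℤ) + 1] (sgen n i * w) := by
  have hin : i ≤ n := by omega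
  have hinlt : i < n := by omega
  have hne : i ≠ n := by omega
  have hi1 : 1 ≤ (i:ℤ) := by exact_mod_cast hi
  have hilt : (i:ℤ) < n := by exact_mod_cast hinlt
  have hwinv := HopAux.signed_inv hw.1
  have hp0 : w⁻¹ (i:ℤ) ≠ 0 := HopAux.signed_ne_zero hwinv (by omega)
  have hq0 : w⁻¹ ((i:ℤ)+1) ≠ 0 := HopAux.signed_ne_zero hwinv (by omega)
  have hpn : |w⁻¹ (i:ℤ)| ≤ (n:ℤ) := HopAux.signed_abs_le hwinv
    (by simp only [Int.abs_eq_natAbs]; omega)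
  have hqn : |w⁻¹ ((i:ℤ)+1)| ≤ (n:ℤ) := HopAux.signed_abs_le hwinv
    (by simp only [Int.abs_eq_natAbs]; omega)
  have hpqne : w⁻¹ (i:ℤ) ≠ w⁻¹ ((i:ℤ)+1) := by
    intro hc
    have := w⁻¹.injective hc
    omega
  have hsinv : (sgen n i)⁻¹ = sgen n i := HopAux.sgen_inv n i hn hi hin
  have hswinv : ∀ x, (sgen n i * w)⁻¹ x = w⁻¹ (sgen n i x) := by
    intro x; rw [mul_inv_rev, Perm.mul_apply, hsinv]
  have hsi : sgen n i (i:ℤ) = (i:ℤ)+1 := by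
    rw [HopAux.sgen_apply_lt n i hi hne]; split_ifs <;> omega
  have hsi1 : sgen n i ((i:ℤ)+1) = (i:ℤ) := by
    rw [HopAux.sgen_apply_lt n i hi hne]; split_ifs <;> omega
  have hswi : (sgen n i * w)⁻¹ (i:ℤ) = w⁻¹ ((i:ℤ)+1) := by rw [hswinv, hsi]
  have hswi1 : (sgen n i * w)⁻¹ ((i:ℤ)+1) = w⁻¹ (i:ℤ) := by rw [hswinv, hsi1]
  have hswe : IsEvenSignedPerm n (sgen n i * w) := HopAux.sgen_mul_even n i hn hi hin w hw
  have hiff := HopAux.negAt_alpha_iff n i hn hi hinlt w hw.1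
  have hDw := HopAux.dlength_eq n hn w hw
  have hDsw := HopAux.dlength_eq n hn (sgen n i * w) hswe
  have hstat := HopAux.dstat_sgen n i hn hi hin w hw.1
  have hdem4 := hdem.2.2.2 i hi hin w hw
  have hkeyne : dkey n (w⁻¹ (i:ℤ)) ≠ dkey n (w⁻¹ ((i:ℤ)+1)) :=
    HopAux.dkey_ne hp0 hpn hq0 hqn hpqne
  rcases lt_or_gt_of_ne hkeyne with hlt | hgt
  · -- ascent case
    have hasc : ¬ HopAux.negAt w (HopAux.alphaR n i) := hiff.2 hlt
    have h1 := hstat.2 hasc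
    have hlen : DLength n w < DLength n (sgen n i * w) := by rw [hDw, hDsw]; omega
    rw [hdem4.1 hlen]
    have hno : ¬ HopStep n (sgen n i * w) (i:ℤ) ((i:ℤ)+1) := by
      rintro ⟨_, _, hk, _⟩
      rw [hswi, hswi1] at hk
      omega
    have hfind : (([(i:ℤ)+1] : List ℤ).reverse).find?
        (fun q => decide (HopStep n (sgen n i * w) (i:ℤ) q)) = none := by
      rw [List.reverse_singleton, List.find?_cons_of_neg (by simpa using hno),
        List.find?_nil]
    exact (HopAux.hop_none n (i:ℤ) [(i:ℤ)+1] (sgen n i * w) hfind).symm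
  · -- descent case
    have hdesc : HopAux.negAt w (HopAux.alphaR n i) := by
      by_contra hc
      have := hiff.1 hc
      omega
    have h1 := hstat.1 hdesc
    have hlen : DLength n (sgen n i * w) < DLength n w := by rw [hDw, hDsw]; omega
    rw [hdem4.2 hlen]
    have hstep : HopStep n (sgen n i * w) (i:ℤ) ((i:ℤ)+1) := by
      refine ⟨⟨by omega, by simp only [Int.abs_eq_natAbs]; omega⟩, ?_, ?_, ?_⟩
      · show dkey n (i:ℤ) < dkey n ((i:ℤ)+1)
        unfold dkey
        split_ifs <;> omega
      · rw [hswi, hswi1]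
        omega
      · rw [hswi1]
        exact HopAux.dkey_le hp0 hpn
    have hfind : (([(i:ℤ)+1] : List ℤ).reverse).find?
        (fun q => decide (HopStep n (sgen n i * w) (i:ℤ) q)) = some ((i:ℤ)+1) := by
      rw [List.reverse_singleton, List.find?_cons_of_pos (by simpa using hstep)]
    rw [HopAux.hop_some n (i:ℤ) [(i:ℤ)+1] (sgen n i * w) ((i:ℤ)+1) hfind]
    have hsw : hswap (i:ℤ) ((i:ℤ)+1) * (sgen n i * w) = w := by
      rw [hswap, if_neg (by omega : ¬ (i:ℤ) = -((i:ℤ)+1)),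
        show Equiv.swap (i:ℤ) ((i:ℤ)+1) * Equiv.swap (-(i:ℤ)) (-((i:ℤ)+1)) = sgen n i from
          (by rw [sgen, if_neg hne]),
        ← mul_assoc, HopAux.sgen_sq n i hn hi hin, one_mul]
    rw [hsw]
    have hno : ¬ HopStep n w (i:ℤ) ((i:ℤ)+1) := by
      rintro ⟨_, _, hk, _⟩
      omega
    have hfind2 : (([(i:ℤ)+1] : List ℤ).reverse).find?
        (fun q => decide (HopStep n w (i:ℤ) q)) = none := by
      rw [List.reverse_singleton, List.find?_cons_of_neg (by simpa using hno),
        List.find?_nil]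
    exact (HopAux.hop_none n (i:ℤ) [(i:ℤ)+1] w hfind2).symm
end
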